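/- Let k be an algebraically closed field of characteristic 2 and let a, c ∈ k[t] with a ≠ 0, deg a ≤ 1, and a·c' = c·a'. Then a divides c and there exists f ∈ k[t] with c = f²·a. -/

import Mathlib

open Polynomial

lemma sq_of_deriv_zero (k : Type*) [Field k] [IsAlgClosed k] [CharP k 2]
    (c : k[X]) (hc : derivative c = 0) : ∃ f : k[X], c = f ^ 2 := by
  have h2 : Fact (Nat.Prime 2) := ⟨Nat.prime_two⟩
  have hec : expand k 2 (contract 2 c) = c := expand_contract 2 hc (by norm_num)
  refine ⟨(contract 2 c).map ((frobeniusEquiv k 2).symm : k →+* k), ?_⟩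
  have h1 := map_frobenius_expand 2 ((contract 2 c).map ((frobeniusEquiv k 2).symm : k →+* k))
  rw [← map_expand, Polynomial.map_map] at h1
  have heq : (frobenius k 2).comp ((frobeniusEquiv k 2).symm : k →+* k) = RingHom.id k := by
    ext x; exact frobenius_apply_frobeniusEquiv_symm k 2 x
  rw [heq, Polynomial.map_id, hec] at h1
  exact h1

theorem stmt_1 (k : Type*) [Field k] [IsAlgClosed k] [CharP k 2]
    (a c : k[X]) (ha : a ≠ 0) (hdeg : a.degree ≤ 1)
    (h : a * derivative c = c * derivative a) :
    a ∣ c ∧ ∃ f : k[X], c = f ^ 2 * a := by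
  have h2 : Fact (Nat.Prime 2) := ⟨Nat.prime_two⟩
  have haeq : a = C (a.coeff 1) * X + C (a.coeff 0) := eq_X_add_C_of_degree_le_one hdeg
  have hda : derivative a = C (a.coeff 1) := by
    conv_lhs => rw [haeq]
    simp
  rcases eq_or_ne (a.coeff 1) 0 with h1 | h1
  · -- a is a nonzero constant
    have haC : a = C (a.coeff 0) := by rw [haeq, h1]; simp
    have ha0 : a.coeff 0 ≠ 0 := fun h0 => ha (by rw [haC, h0, map_zero])
    have hdc : derivative c = 0 := by
      have := h
      rw [hda, h1, map_zero, mul_zero] at this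
      exact (mul_eq_zero.mp this).resolve_left ha
    obtain ⟨g, hg⟩ := sq_of_deriv_zero k c hdc
    have hu : IsUnit a := haC ▸ isUnit_C.mpr (isUnit_iff_ne_zero.mpr ha0)
    refine ⟨hu.dvd, ⟨g * C ((frobeniusEquiv k 2).symm (a.coeff 0)⁻¹), ?_⟩⟩
    have hsq : ((frobeniusEquiv k 2).symm (a.coeff 0)⁻¹) ^ 2 = (a.coeff 0)⁻¹ :=
      frobenius_apply_frobeniusEquiv_symm k 2 _
    conv_rhs => rw [haC]
    rw [hg, mul_pow, ← C_pow, coeff_C_zero, hsq, mul_assoc, ← C_mul, inv_mul_cancel₀ ha0, C_1, mul_one]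
  · -- deg a = 1
    have hdvd : a ∣ c := by
      have hd : a ∣ c * derivative a := ⟨derivative c, h.symm⟩
      rw [hda] at hd
      exact (IsUnit.dvd_mul_right (isUnit_C.mpr (isUnit_iff_ne_zero.mpr h1))).mp hd
    obtain ⟨d, hcd⟩ := hdvd
    have hdd : derivative d = 0 := by
      have hh : a * (derivative a * d + a * derivative d) = a * d * derivative a := by
        rw [← derivative_mul, ← hcd, h, hcd]
      have : a * a * derivative d = 0 := by ring_nf; ring_nf at hh; linear_combination hh
      have := (mul_eq_zero.mp this).resolve_left (mul_ne_zero ha ha)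
      exact this
    obtain ⟨f, hf⟩ := sq_of_deriv_zero k d hdd
    exact ⟨⟨d, hcd⟩, ⟨f, by rw [hcd, hf, mul_comm]⟩⟩
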